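/- arXiv:1111.1580 — 5 statements merged into one kernel-verified Lean document; each statement's English description precedes it below -/
import Mathlib

section
/- For every m in W^{1,2}(0,1) and every ν > 0, one has ∫₀¹ e^{2m} dx ≤ ((1+ν)/4)(∫₀¹ e^m dx)² ∫₀¹ |m_x|² dx + (1 + 1/ν)(∫₀¹ e^m dx)². -/
open MeasureTheory Set

-- Cauchy–Schwarz for integrals
lemma my_integral_cauchy_schwarz {μ : Measure ℝ} {f g : ℝ → ℝ}
    (hf : Integrable (fun x => f x ^ 2) μ) (hg : Integrable (fun x => g x ^ 2) μ)
    (hfg : Integrable (fun x => f x * g x) μ) :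
    (∫ x, f x * g x ∂μ) ^ 2 ≤ (∫ x, f x ^ 2 ∂μ) * (∫ x, g x ^ 2 ∂μ) := by
  set A := ∫ x, f x ^ 2 ∂μ
  set B := ∫ x, f x * g x ∂μ
  set C := ∫ x, g x ^ 2 ∂μ
  have key : ∀ t : ℝ, 0 ≤ A * (t * t) + (2 * B) * t + C := by
    intro t
    have h0 : 0 ≤ ∫ x, (t * f x + g x) ^ 2 ∂μ := integral_nonneg fun x => sq_nonneg _
    have heq : ∫ x, (t * f x + g x) ^ 2 ∂μ = A * (t * t) + (2 * B) * t + C := by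
      have h1 : (fun x => (t * f x + g x) ^ 2)
          = fun x => (t * t) * f x ^ 2 + ((2 * t) * (f x * g x) + g x ^ 2) := by
        funext x; ring
      have i1 : Integrable (fun x => t * t * f x ^ 2) μ := hf.const_mul (t*t)
      have i2 : Integrable (fun x => 2 * t * (f x * g x)) μ := hfg.const_mul (2*t)
      have i3 : Integrable (fun x => 2 * t * (f x * g x) + g x ^ 2) μ := i2.add hg
      rw [h1]
      rw [integral_add i1 i3, integral_add i2 hg, MeasureTheory.integral_const_mul, MeasureTheory.integral_const_mul]
      ring
    linarith [heq ▸ h0]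
  have hd := discrim_le_zero key
  rw [discrim] at hd
  nlinarith [hd]

/-- For every `m ∈ W^{1,2}(0,1)` and every `ν > 0`,
`∫₀¹ e^{2m} ≤ ((1+ν)/4) (∫₀¹ e^m)² ∫₀¹ |m_x|² + (1 + 1/ν) (∫₀¹ e^m)²`. -/
theorem exp_moser_trudinger_type (m m' : ℝ → ℝ)
    (hderiv : ∀ x ∈ Ioo (0:ℝ) 1, HasDerivAt m (m' x) x)
    (hm : IntegrableOn m (Ioo 0 1))
    (hm' : IntegrableOn (fun x => (m' x) ^ 2) (Ioo 0 1))
    (ν : ℝ) (hν : 0 < ν) :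
    (∫ x in (0:ℝ)..1, Real.exp (2 * m x)) ≤
      (1 + ν) / 4 * (∫ x in (0:ℝ)..1, Real.exp (m x)) ^ 2 *
        (∫ x in (0:ℝ)..1, (m' x) ^ 2) +
      (1 + 1 / ν) * (∫ x in (0:ℝ)..1, Real.exp (m x)) ^ 2 := by
  have hIoo : MeasurableSet (Ioo (0:ℝ) 1) := measurableSet_Ioo
  have hvol : volume (Ioo (0:ℝ) 1) = 1 := by simp
  have hfin : volume (Ioo (0:ℝ) 1) ≠ ⊤ := by rw [hvol]; exact ENNReal.one_ne_top
  -- m' is a.e. strongly measurable on Ioo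
  have hm'meas : AEStronglyMeasurable m' (volume.restrict (Ioo (0:ℝ) 1)) := by
    have h1 : ∀ᵐ x ∂(volume.restrict (Ioo (0:ℝ) 1)), deriv m x = m' x :=
      (ae_restrict_iff' hIoo).2 (Filter.Eventually.of_forall fun x hx => (hderiv x hx).deriv)
    exact ((measurable_deriv m).aestronglyMeasurable).congr h1
  -- m' is integrable on Ioo
  have hconst : IntegrableOn (fun _ : ℝ => (1:ℝ)) (Ioo 0 1) volume := by
    exact integrableOn_const hfin (by simp)
  have hm'int : IntegrableOn m' (Ioo 0 1) := by
    have hdom : IntegrableOn (fun x => (m' x ^ 2 + 1) / 2) (Ioo 0 1) :=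
      (hm'.add hconst).div_const 2
    refine Integrable.mono' hdom hm'meas (Filter.Eventually.of_forall fun x => ?_)
    simp only [Real.norm_eq_abs]
    nlinarith [sq_nonneg (|m' x| - 1), abs_nonneg (m' x), sq_abs (m' x)]
  -- subintervals with endpoints in Ioo lie in Ioo
  have hsub : ∀ a ∈ Ioo (0:ℝ) 1, ∀ b ∈ Ioo (0:ℝ) 1, uIcc a b ⊆ Ioo 0 1 := fun a ha b hb =>
    (Set.ordConnected_Ioo).uIcc_subset ha hb
  -- m is bounded above on Ioo
  set Cm : ℝ := m (1/2) + ∫ t in Ioo (0:ℝ) 1, |m' t| with hCm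
  have half_mem : (1/2 : ℝ) ∈ Ioo (0:ℝ) 1 := by norm_num
  have habs_nonneg : (0:ℝ) ≤ ∫ t in Ioo (0:ℝ) 1, |m' t| :=
    setIntegral_nonneg hIoo fun t _ => abs_nonneg _
  have hmono_abs : ∀ a ∈ Ioo (0:ℝ) 1, ∀ b ∈ Ioo (0:ℝ) 1, ∀ {f : ℝ → ℝ},
      IntegrableOn f (Ioo 0 1) → |∫ t in a..b, f t| ≤ ∫ t in Ioo (0:ℝ) 1, |f t| := by
    intro a ha b hb f hf
    have h1 : |∫ t in a..b, f t| ≤ ∫ t in Set.uIoc a b, |f t| := by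
      have := intervalIntegral.norm_integral_le_integral_norm_uIoc (f := f) (a := a) (b := b)
        (μ := volume)
      simpa only [Real.norm_eq_abs] using this
    refine h1.trans (setIntegral_mono_set hf.abs
      ((ae_restrict_iff' hIoo).2 (Filter.Eventually.of_forall fun t _ => abs_nonneg _)) ?_)
    exact Filter.Eventually.of_forall
      ((Set.uIoc_subset_uIcc).trans (hsub a ha b hb) : Set.uIoc a b ⊆ Ioo 0 1)
  have hmbound : ∀ x ∈ Ioo (0:ℝ) 1, m x ≤ Cm := by
    intro x hx
    have hftc : ∫ t in (1/2:ℝ)..x, m' t = m x - m (1/2) := by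
      refine intervalIntegral.integral_eq_sub_of_hasDerivAt
        (fun t ht => hderiv t (hsub _ half_mem _ hx ht)) ?_
      exact (hm'int.mono_set (hsub _ half_mem _ hx)).intervalIntegrable
    have h2 : |∫ t in (1/2:ℝ)..x, m' t| ≤ ∫ t in Ioo (0:ℝ) 1, |m' t| :=
      hmono_abs _ half_mem _ hx hm'int
    rw [hftc] at h2
    have := abs_le.1 h2
    simp only [hCm]
    linarith [this.2]
  -- integrability of the exponential expressions
  have hexp_meas : AEStronglyMeasurable (fun x => Real.exp (m x))
      (volume.restrict (Ioo (0:ℝ) 1)) :=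
    Real.continuous_exp.comp_aestronglyMeasurable hm.1
  have hexp2_meas : AEStronglyMeasurable (fun x => Real.exp (2 * m x))
      (volume.restrict (Ioo (0:ℝ) 1)) :=
    Real.continuous_exp.comp_aestronglyMeasurable (hm.1.const_mul 2)
  have hexph_meas : AEStronglyMeasurable (fun x => Real.exp (m x / 2))
      (volume.restrict (Ioo (0:ℝ) 1)) :=
    Real.continuous_exp.comp_aestronglyMeasurable ((hm.1.aemeasurable.div_const 2).aestronglyMeasurable)
  have hexp_int : IntegrableOn (fun x => Real.exp (m x)) (Ioo 0 1) := by
    refine Integrable.mono' (hconst.const_mul (Real.exp Cm)) hexp_meas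
      (((ae_restrict_iff' hIoo).2 (Filter.Eventually.of_forall fun x hx => ?_)))
    simp only [Real.norm_eq_abs, Real.abs_exp, mul_one]
    exact Real.exp_le_exp.2 (hmbound x hx)
  have hexp2_int : IntegrableOn (fun x => Real.exp (2 * m x)) (Ioo 0 1) := by
    refine Integrable.mono' (hconst.const_mul (Real.exp (2 * Cm))) hexp2_meas
      (((ae_restrict_iff' hIoo).2 (Filter.Eventually.of_forall fun x hx => ?_)))
    simp only [Real.norm_eq_abs, Real.abs_exp, mul_one]
    exact Real.exp_le_exp.2 (by linarith [hmbound x hx])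
  have hg_int : IntegrableOn (fun t => Real.exp (m t / 2) * (m' t / 2)) (Ioo 0 1) := by
    refine Integrable.mono' ((hm'int.abs.div_const 2).const_mul (Real.exp (Cm / 2)))
      (hexph_meas.mul ((hm'meas.aemeasurable.div_const 2).aestronglyMeasurable))
      (((ae_restrict_iff' hIoo).2 (Filter.Eventually.of_forall fun x hx => ?_)))
    have hb := hmbound x hx
    have h1 : Real.exp (m x / 2) ≤ Real.exp (Cm / 2) :=
      Real.exp_le_exp.2 (by gcongr)
    have h2 : (0:ℝ) < Real.exp (m x / 2) := Real.exp_pos _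
    simp only [Real.norm_eq_abs, abs_mul, Real.abs_exp, abs_div]
    rw [abs_two]
    have : |m' x| / 2 ≤ |m' x| / 2 := le_refl _
    gcongr
  -- main quantities
  set E := ∫ x in Ioo (0:ℝ) 1, Real.exp (m x) with hEdef
  set D := ∫ x in Ioo (0:ℝ) 1, (m' x) ^ 2 with hDdef
  set S := ∫ t in Ioo (0:ℝ) 1, (|m' t| / 2) * Real.exp (m t / 2) with hSdef
  have hE0 : 0 ≤ E := setIntegral_nonneg hIoo fun x _ => (Real.exp_pos _).le
  have hS0 : 0 ≤ S := setIntegral_nonneg hIoo fun x _ =>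
    mul_nonneg (by positivity) (Real.exp_pos _).le
  have hSeq : ∫ t in Ioo (0:ℝ) 1, |Real.exp (m t / 2) * (m' t / 2)| = S :=
    integral_congr_ae (Filter.Eventually.of_forall fun t => by
      show |Real.exp (m t / 2) * (m' t / 2)| = |m' t| / 2 * Real.exp (m t / 2)
      rw [abs_mul, Real.abs_exp, abs_div, abs_two, mul_comm])
  -- FTC estimate
  have hftc2 : ∀ x ∈ Ioo (0:ℝ) 1, ∀ y ∈ Ioo (0:ℝ) 1,
      Real.exp (m x / 2) ≤ Real.exp (m y / 2) + S := by
    intro x hx y hy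
    have heq : ∫ t in y..x, Real.exp (m t / 2) * (m' t / 2)
        = Real.exp (m x / 2) - Real.exp (m y / 2) := by
      refine intervalIntegral.integral_eq_sub_of_hasDerivAt
        (f := fun t => Real.exp (m t / 2)) (fun t ht => ?_) ?_
      · exact ((hderiv t (hsub _ hy _ hx ht)).div_const 2).exp
      · exact (hg_int.mono_set (hsub _ hy _ hx)).intervalIntegrable
    have h2 := hmono_abs _ hy _ hx hg_int
    rw [heq, hSeq] at h2
    linarith [(abs_le.1 h2).2]
  -- Cauchy–Schwarz : S^2 ≤ D/4 * E
  have hf1sq : IntegrableOn (fun t => (|m' t| / 2) ^ 2) (Ioo 0 1) := by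
    have h : (fun t => (|m' t| / 2) ^ 2) = fun t => m' t ^ 2 / 4 :=
      funext fun t => by rw [div_pow, sq_abs]; norm_num
    rw [h]; exact hm'.div_const 4
  have hf2sq : IntegrableOn (fun t => (Real.exp (m t / 2)) ^ 2) (Ioo 0 1) := by
    have h : (fun t => (Real.exp (m t / 2)) ^ 2) = fun t => Real.exp (m t) :=
      funext fun t => by rw [sq, ← Real.exp_add]; congr 1; ring
    rw [h]; exact hexp_int
  have hf12 : IntegrableOn (fun t => (|m' t| / 2) * Real.exp (m t / 2)) (Ioo 0 1) := by
    have h : (fun t => (|m' t| / 2) * Real.exp (m t / 2))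
        = fun t => |Real.exp (m t / 2) * (m' t / 2)| :=
      funext fun t => by rw [abs_mul, Real.abs_exp, abs_div, abs_two, mul_comm]
    rw [h]; exact hg_int.abs
  have hcs := my_integral_cauchy_schwarz (μ := volume.restrict (Ioo (0:ℝ) 1)) hf1sq hf2sq hf12
  have hD4 : ∫ t in Ioo (0:ℝ) 1, (|m' t| / 2) ^ 2 = D / 4 := by
    rw [hDdef, ← integral_div]
    exact integral_congr_ae (Filter.Eventually.of_forall fun t => by
      show (|m' t| / 2) ^ 2 = m' t ^ 2 / 4
      rw [div_pow, sq_abs]; norm_num)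
  have hEeq : ∫ t in Ioo (0:ℝ) 1, (Real.exp (m t / 2)) ^ 2 = E := by
    rw [hEdef]
    exact integral_congr_ae (Filter.Eventually.of_forall fun t => by
      show Real.exp (m t / 2) ^ 2 = Real.exp (m t)
      rw [sq, ← Real.exp_add]; congr 1; ring)
  rw [hD4, hEeq] at hcs
  have hS2 : S ^ 2 ≤ D / 4 * E := hcs
  -- a point where exp (m y) is below average
  obtain ⟨y, hy, hyE⟩ := exists_le_setAverage (μ := volume) (s := Ioo (0:ℝ) 1)
    (by rw [hvol]; exact one_ne_zero) hfin hexp_int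
  rw [setAverage_eq, measureReal_def, hvol] at hyE
  simp only [ENNReal.toReal_one, inv_one, one_smul] at hyE
  -- pointwise key estimate
  have hkey : ∀ x ∈ Ioo (0:ℝ) 1, Real.exp (2 * m x) ≤
      ((1 + 1/ν) * Real.exp (m y) + (1 + ν) * S ^ 2) * Real.exp (m x) := by
    intro x hx
    have h1 : Real.exp (m x / 2) ≤ Real.exp (m y / 2) + S := hftc2 x hx y hy
    have h2 : Real.exp (m x) = Real.exp (m x / 2) ^ 2 := by
      rw [sq, ← Real.exp_add]; congr 1; ring
    have h3 : Real.exp (m y) = Real.exp (m y / 2) ^ 2 := by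
      rw [sq, ← Real.exp_add]; congr 1; ring
    have hexp2eq : Real.exp (2 * m x) = Real.exp (m x) * Real.exp (m x) := by
      rw [← Real.exp_add]; congr 1; ring
    have hyoung : Real.exp (m x) ≤ (1 + 1/ν) * Real.exp (m y) + (1 + ν) * S ^ 2 := by
      rw [h2, h3]
      have hsq : Real.exp (m x / 2) ^ 2 ≤ (Real.exp (m y / 2) + S) ^ 2 :=
        pow_le_pow_left₀ (Real.exp_pos _).le h1 2
      refine hsq.trans ?_
      have hid : ν * ((1 + 1/ν) * Real.exp (m y / 2) ^ 2 + (1 + ν) * S ^ 2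
          - (Real.exp (m y / 2) + S) ^ 2) = (Real.exp (m y / 2) - ν * S) ^ 2 := by
        field_simp; ring
      nlinarith [hid, sq_nonneg (Real.exp (m y / 2) - ν * S), hν]
    rw [hexp2eq]
    exact mul_le_mul_of_nonneg_right hyoung (Real.exp_pos _).le
  -- integrate the key estimate
  have hA : ∫ x in Ioo (0:ℝ) 1, Real.exp (2 * m x) ≤
      ((1 + 1/ν) * Real.exp (m y) + (1 + ν) * S ^ 2) * E := by
    have hmono := setIntegral_mono_on hexp2_int (hexp_int.const_mul
      ((1 + 1/ν) * Real.exp (m y) + (1 + ν) * S ^ 2)) hIoo hkey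
    rwa [MeasureTheory.integral_const_mul] at hmono
  -- convert interval integrals and conclude
  rw [intervalIntegral.integral_of_le zero_le_one, intervalIntegral.integral_of_le zero_le_one,
    intervalIntegral.integral_of_le zero_le_one, integral_Ioc_eq_integral_Ioo,
    integral_Ioc_eq_integral_Ioo, integral_Ioc_eq_integral_Ioo]
  have hc1 : (1 + 1/ν) * Real.exp (m y) * E ≤ (1 + 1/ν) * E * E :=
    mul_le_mul_of_nonneg_right (mul_le_mul_of_nonneg_left hyE (by positivity)) hE0
  have hc2 : (1 + ν) * S ^ 2 * E ≤ (1 + ν) * (D / 4 * E) * E :=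
    mul_le_mul_of_nonneg_right (mul_le_mul_of_nonneg_left hS2 (by positivity)) hE0
  nlinarith [hA, hc1, hc2]
end

section
/- Let χ > 0 and let u : (0,1) → ℝ be nonnegative with log(1+u) ∈ W^{1,2}(0,1) and ∫₀¹ u dx = M. If M < 2/√χ − 1, then there exists a constant C depending only on M and χ such that χ ∫₀¹ u² dx ≤ ∫₀¹ |(log(1+u))_x|² dx + C. -/
set_option maxHeartbeats 1000000

open MeasureTheory Set

private lemma arith_le_one_add_sq (t : ℝ) : t ≤ 1 + t ^ 2 := by nlinarith [sq_nonneg (t - 1)]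

private lemma arith_abs_half_mul (p q : ℝ) (hq : 0 < q) : |p / 2 * q| ≤ p ^ 2 + q ^ 2 := by
  rw [abs_mul, abs_div, abs_of_pos hq]
  have h2 : |(2:ℝ)| = 2 := by norm_num
  rw [h2]
  nlinarith [sq_nonneg (|p| - q), sq_abs p, abs_nonneg p, hq.le]

private lemma arith_sqrt_le (v t : ℝ) (h2 : v ^ 2 = 1 + t) (h3 : 0 ≤ t) (h5 : 0 < v) :
    v ≤ 1 + t / 2 := by nlinarith [sq_nonneg t]

private lemma arith_u_le (v t K : ℝ) (h2 : v ^ 2 = 1 + t) (h3 : 0 ≤ t) (h4 : v ≤ K)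
    (h5 : 0 < v) : t ≤ K * v := by nlinarith

private lemma arith_final (χ M sx sy X : ℝ) (hχ : 0 < χ) (hM0 : 0 ≤ M)
    (hsy2 : sy ^ 2 = 1 + M) (hsx2 : sx ^ 2 = X) (hsx0 : 0 ≤ sx) (hsy0 : 0 ≤ sy)
    (ha1 : χ * (1 + M) ^ 2 / 4 < 1) :
    χ * ((1 + M / 2 + sx * sy / 2) ^ 2 * (1 + M)) ≤
      X + (χ * (1 + M) * (1 + M / 2) ^ 2 +
        (χ * (1 + M) * (1 + M / 2) * sy / 2) ^ 2 / (1 - χ * (1 + M) ^ 2 / 4)) := by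
  set a : ℝ := χ * (1 + M) ^ 2 / 4 with ha_def
  set P : ℝ := χ * (1 + M) * (1 + M / 2) * sy / 2 with hP_def
  have h1a : (0:ℝ) < 1 - a := by rw [ha_def]; linarith
  have key : 2 * (P * sx) ≤ (1 - a) * sx ^ 2 + P ^ 2 / (1 - a) := by
    have h2 : 2 * (P * sx) * (1 - a) ≤ (1 - a) ^ 2 * sx ^ 2 + P ^ 2 := by
      nlinarith [sq_nonneg ((1 - a) * sx - P)]
    calc 2 * (P * sx) = 2 * (P * sx) * (1 - a) / (1 - a) := by field_simp
      _ ≤ ((1 - a) ^ 2 * sx ^ 2 + P ^ 2) / (1 - a) := (div_le_div_iff_of_pos_right h1a).mpr h2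
      _ = (1 - a) * sx ^ 2 + P ^ 2 / (1 - a) := by field_simp
  have hkey2 : χ * (1 + M) * (sy ^ 2 * sx ^ 2) = χ * (1 + M) * ((1 + M) * sx ^ 2) := by
    rw [hsy2]
  have hPsx : P * sx = χ * (1 + M) * (1 + M / 2) * (sy * sx) / 2 := by rw [hP_def]; ring
  have haSx : a * sx ^ 2 = χ * (1 + M) ^ 2 * sx ^ 2 / 4 := by rw [ha_def]; ring
  nlinarith [key, hkey2, hPsx, haSx, hsx2]


theorem exists_le_avg (w : ℝ → ℝ) (hw : IntegrableOn w (Ioo 0 1)) :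
    ∃ y ∈ Ioo (0:ℝ) 1, w y ≤ ∫ x in Ioo (0:ℝ) 1, w x := by
  by_contra h
  push_neg at h
  set I := ∫ x in Ioo (0:ℝ) 1, w x with hI
  have hvol : volume (Ioo (0:ℝ) 1) = 1 := by simp
  have hci : IntegrableOn (fun _ : ℝ => I) (Ioo 0 1) := integrableOn_const (by simp)
  have hint : IntegrableOn (fun x => w x - I) (Ioo 0 1) := hw.sub hci
  have hpos : 0 < ∫ x in Ioo (0:ℝ) 1, (w x - I) := by
    rw [setIntegral_pos_iff_support_of_nonneg_ae]
    · have hsub : Ioo (0:ℝ) 1 ⊆ (Function.support fun x => w x - I) ∩ Ioo 0 1 := by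
        intro x hx
        exact ⟨sub_ne_zero.mpr (h x hx).ne', hx⟩
      calc (0:ENNReal) < 1 := by norm_num
        _ = volume (Ioo (0:ℝ) 1) := hvol.symm
        _ ≤ _ := measure_mono hsub
    · filter_upwards [ae_restrict_mem measurableSet_Ioo] with x hx
      exact sub_nonneg.mpr (h x hx).le
    · exact hint
  have heq : ∫ x in Ioo (0:ℝ) 1, (w x - I) = 0 := by
    rw [integral_sub hw hci]
    simp [hvol]
    exact sub_self _
  linarith

theorem my_cauchy {μ : Measure ℝ} (f g : ℝ → ℝ)
    (hfm : AEStronglyMeasurable f μ) (hgm : AEStronglyMeasurable g μ)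
    (hf2 : Integrable (fun x => f x ^ 2) μ) (hg2 : Integrable (fun x => g x ^ 2) μ)
    (hfn : 0 ≤ᵐ[μ] f) (hgn : 0 ≤ᵐ[μ] g) :
    ∫ x, f x * g x ∂μ ≤ Real.sqrt (∫ x, f x ^ 2 ∂μ) * Real.sqrt (∫ x, g x ^ 2 ∂μ) := by
  have hpq : Real.HolderConjugate 2 2 := by constructor <;> norm_num
  have hf : MemLp f (ENNReal.ofReal 2) μ := by
    rw [ENNReal.ofReal_ofNat]
    exact (memLp_two_iff_integrable_sq hfm).mpr hf2
  have hg : MemLp g (ENNReal.ofReal 2) μ := by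
    rw [ENNReal.ofReal_ofNat]
    exact (memLp_two_iff_integrable_sq hgm).mpr hg2
  have h := integral_mul_le_Lp_mul_Lq_of_nonneg hpq hfn hgn hf hg
  have e1 : ∫ x, f x ^ (2:ℝ) ∂μ = ∫ x, f x ^ 2 ∂μ := by
    refine integral_congr_ae ?_
    filter_upwards [hfn] with x hx
    rw [← Real.rpow_natCast (f x) 2]; norm_num
  have e2 : ∫ x, g x ^ (2:ℝ) ∂μ = ∫ x, g x ^ 2 ∂μ := by
    refine integral_congr_ae ?_
    filter_upwards [hgn] with x hx
    rw [← Real.rpow_natCast (g x) 2]; norm_num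
  rw [e1, e2] at h
  refine h.trans (le_of_eq ?_)
  rw [Real.sqrt_eq_rpow, Real.sqrt_eq_rpow]

/-- If `χ > 0` and `M < 2/√χ − 1`, then there is a constant `C = C(M, χ)` such that for
every nonnegative `u` on `(0,1)` with `log(1+u) ∈ W^{1,2}(0,1)` (weak derivative `d`) and
`∫₀¹ u = M`, one has `χ ∫₀¹ u² ≤ ∫₀¹ |(log(1+u))_x|² + C`. -/
theorem mass_smallness_L2_bound (χ M : ℝ) (hχ : 0 < χ)
    (hM : M < 2 / Real.sqrt χ - 1) :
    ∃ C : ℝ, ∀ u d : ℝ → ℝ,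
      (∀ x ∈ Ioo (0:ℝ) 1, 0 ≤ u x) →
      (∀ x ∈ Ioo (0:ℝ) 1, HasDerivAt (fun y => Real.log (1 + u y)) (d x) x) →
      IntegrableOn (fun x => (u x) ^ 2) (Ioo 0 1) →
      IntegrableOn (fun x => (d x) ^ 2) (Ioo 0 1) →
      (∫ x in (0:ℝ)..1, u x) = M →
      χ * ∫ x in (0:ℝ)..1, (u x) ^ 2 ≤ (∫ x in (0:ℝ)..1, (d x) ^ 2) + C := by
  by_cases hM0 : 0 ≤ M
  swap
  · refine ⟨0, fun u d hu hd hu2 hd2 hint => absurd ?_ hM0⟩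
    rw [← hint, intervalIntegral.integral_of_le zero_le_one,
      MeasureTheory.integral_Ioc_eq_integral_Ioo]
    exact setIntegral_nonneg measurableSet_Ioo hu
  -- main case
  have hsχ : (0:ℝ) < Real.sqrt χ := Real.sqrt_pos.mpr hχ
  have h1M : (0:ℝ) < 1 + M := by linarith
  have h2 : (1 + M) * Real.sqrt χ < 2 := by
    rw [← lt_div_iff₀ hsχ]
    linarith
  have ha4 : χ * (1 + M) ^ 2 < 4 := by
    have hs : Real.sqrt χ ^ 2 = χ := Real.sq_sqrt hχ.le
    have h3 : ((1 + M) * Real.sqrt χ) ^ 2 < 2 ^ 2 := by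
      have hnn : 0 ≤ (1 + M) * Real.sqrt χ := by positivity
      nlinarith
    calc χ * (1 + M) ^ 2 = ((1 + M) * Real.sqrt χ) ^ 2 := by rw [mul_pow, hs]; ring
      _ < 4 := by norm_num at h3 ⊢; linarith
  refine ⟨χ * (1 + M) * (1 + M / 2) ^ 2 +
      (χ * (1 + M) * (1 + M / 2) * Real.sqrt (1 + M) / 2) ^ 2 / (1 - χ * (1 + M) ^ 2 / 4),
    fun u d hu hd hu2 hd2 hint => ?_⟩
  set sy := Real.sqrt (1 + M) with hsy_def
  have hsy2 : sy ^ 2 = 1 + M := Real.sq_sqrt h1M.le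
  have hsy0 : 0 ≤ sy := Real.sqrt_nonneg _
  set A : ℝ := 1 + M / 2 with hA_def
  have hA1 : (1:ℝ) ≤ A := by rw [hA_def]; linarith
  set a : ℝ := χ * (1 + M) ^ 2 / 4 with ha_def
  have ha1 : a < 1 := by rw [ha_def]; linarith
  have ha0 : 0 < a := by rw [ha_def]; positivity
  -- rewrite interval integrals as set integrals over Ioo
  rw [intervalIntegral.integral_of_le zero_le_one, intervalIntegral.integral_of_le zero_le_one,
    MeasureTheory.integral_Ioc_eq_integral_Ioo, MeasureTheory.integral_Ioc_eq_integral_Ioo]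
  have hMeq : ∫ x in Ioo (0:ℝ) 1, u x = M := by
    rw [← hint, intervalIntegral.integral_of_le zero_le_one,
      MeasureTheory.integral_Ioc_eq_integral_Ioo]
  have hconst : ∀ c : ℝ, IntegrableOn (fun _ : ℝ => c) (Ioo (0:ℝ) 1) := fun c =>
    integrableOn_const (by simp)
  -- measurability
  have hu_ae : AEStronglyMeasurable u (volume.restrict (Ioo 0 1)) := by
    have h1 : AEStronglyMeasurable (fun x => Real.sqrt (u x ^ 2)) (volume.restrict (Ioo 0 1)) :=
      Real.continuous_sqrt.comp_aestronglyMeasurable hu2.aestronglyMeasurable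
    refine h1.congr ?_
    filter_upwards [ae_restrict_mem measurableSet_Ioo] with x hx
    exact Real.sqrt_sq (hu x hx)
  have hu1 : IntegrableOn u (Ioo (0:ℝ) 1) := by
    have hb : IntegrableOn (fun x => 1 + u x ^ 2) (Ioo (0:ℝ) 1) := (hconst 1).add hu2
    refine Integrable.mono' hb hu_ae ?_
    filter_upwards [ae_restrict_mem measurableSet_Ioo] with x hx
    have h0 := hu x hx
    rw [Real.norm_eq_abs, abs_of_nonneg h0]
    exact arith_le_one_add_sq (u x)
  have hd_ae : AEStronglyMeasurable d (volume.restrict (Ioo 0 1)) := by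
    have h1 : Measurable (deriv fun y => Real.log (1 + u y)) := measurable_deriv _
    refine h1.aestronglyMeasurable.congr ?_
    filter_upwards [ae_restrict_mem measurableSet_Ioo] with x hx
    exact (hd x hx).deriv
  -- the function w = sqrt (1 + u) = exp (log (1+u) / 2)
  set w : ℝ → ℝ := fun x => Real.exp (Real.log (1 + u x) / 2) with hw_def
  have hw_pos : ∀ x, 0 < w x := fun x => Real.exp_pos _
  have hw_sq : ∀ x ∈ Ioo (0:ℝ) 1, w x ^ 2 = 1 + u x := by
    intro x hx
    have h0 : (0:ℝ) < 1 + u x := by have := hu x hx; linarith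
    rw [hw_def]
    simp only []
    rw [sq, ← Real.exp_add, add_halves, Real.exp_log h0]
  have hw_ae : AEStronglyMeasurable w (volume.restrict (Ioo 0 1)) := by
    have hm : Measurable fun t : ℝ => Real.exp (Real.log (1 + t) / 2) :=
      Real.measurable_exp.comp
        ((Real.measurable_log.comp (measurable_const.add measurable_id)).div_const 2)
    exact (hm.comp_aemeasurable hu_ae.aemeasurable).aestronglyMeasurable
  have hw_deriv : ∀ x ∈ Ioo (0:ℝ) 1, HasDerivAt w (d x / 2 * w x) x := by
    intro x hx
    have h := ((hd x hx).div_const 2).exp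
    simpa [hw_def, mul_comm] using h
  have hw2_int : IntegrableOn (fun x => w x ^ 2) (Ioo (0:ℝ) 1) := by
    refine ((hconst 1).add hu1).congr ?_
    filter_upwards [ae_restrict_mem measurableSet_Ioo] with x hx
    exact (hw_sq x hx).symm
  have hY : ∫ x in Ioo (0:ℝ) 1, w x ^ 2 = 1 + M := by
    have h1 : ∫ x in Ioo (0:ℝ) 1, w x ^ 2 = ∫ x in Ioo (0:ℝ) 1, (1 + u x) :=
      setIntegral_congr_fun measurableSet_Ioo fun x hx => hw_sq x hx
    rw [h1, integral_add (hconst 1) hu1, hMeq]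
    simp
  have hw_int : IntegrableOn w (Ioo (0:ℝ) 1) := by
    have hb : IntegrableOn (fun x => 1 + w x ^ 2) (Ioo (0:ℝ) 1) := (hconst 1).add hw2_int
    refine Integrable.mono' hb hw_ae ?_
    filter_upwards with x
    rw [Real.norm_eq_abs, abs_of_pos (hw_pos x)]
    exact arith_le_one_add_sq (w x)
  have hwd_int : IntegrableOn (fun x => d x / 2 * w x) (Ioo (0:ℝ) 1) := by
    have hb : IntegrableOn (fun x => d x ^ 2 + w x ^ 2) (Ioo (0:ℝ) 1) := hd2.add hw2_int
    have hm : AEStronglyMeasurable (fun x => d x / 2 * w x) (volume.restrict (Ioo 0 1)) := by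
      have h1 : AEStronglyMeasurable (fun x => (2:ℝ)⁻¹ * (d x * w x))
          (volume.restrict (Ioo 0 1)) := (hd_ae.mul hw_ae).const_mul _
      refine h1.congr ?_
      filter_upwards with x
      ring
    refine Integrable.mono' hb hm ?_
    filter_upwards with x
    rw [Real.norm_eq_abs]
    exact arith_abs_half_mul (d x) (w x) (hw_pos x)
  -- the quantity X = ∫ d^2 and sx = √X
  set X := ∫ x in Ioo (0:ℝ) 1, d x ^ 2 with hX_def
  have hX0 : 0 ≤ X := setIntegral_nonneg measurableSet_Ioo fun x _ => sq_nonneg _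
  set sx := Real.sqrt X with hsx_def
  have hsx2 : sx ^ 2 = X := Real.sq_sqrt hX0
  have hsx0 : 0 ≤ sx := Real.sqrt_nonneg _
  -- Cauchy-Schwarz: ∫ |d| w ≤ sx * sy
  have hCS : ∫ x in Ioo (0:ℝ) 1, |d x| * w x ≤ sx * sy := by
    have habsm : AEStronglyMeasurable (fun x => |d x|) (volume.restrict (Ioo 0 1)) :=
      hd_ae.norm.congr (Filter.Eventually.of_forall fun x => Real.norm_eq_abs (d x))
    have habs2 : Integrable (fun x => |d x| ^ 2) (volume.restrict (Ioo 0 1)) := by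
      refine hd2.congr ?_
      filter_upwards with x
      rw [sq_abs]
    have h := my_cauchy (fun x => |d x|) w habsm hw_ae habs2 hw2_int
      (Filter.Eventually.of_forall fun x => abs_nonneg _)
      (Filter.Eventually.of_forall fun x => (hw_pos x).le)
    have e1 : ∫ x in Ioo (0:ℝ) 1, |d x| ^ 2 = X := by
      rw [hX_def]
      exact setIntegral_congr_fun measurableSet_Ioo fun x _ => sq_abs _
    rw [e1, hY] at h
    exact h
  -- bound on the integral of |w'|
  have hwI' : ∫ x in Ioo (0:ℝ) 1, |d x / 2 * w x| ≤ sx * sy / 2 := by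
    have heqf : (fun x => |d x / 2 * w x|) = fun x => |d x| * w x / 2 := by
      funext x
      rw [abs_mul, abs_div, abs_of_pos (hw_pos x)]
      simp
      ring
    rw [heqf]
    have : ∫ x in Ioo (0:ℝ) 1, |d x| * w x / 2 = (∫ x in Ioo (0:ℝ) 1, |d x| * w x) / 2 :=
      integral_div 2 _
    rw [this]
    linarith
  -- average bound
  have havg : ∫ x in Ioo (0:ℝ) 1, w x ≤ 1 + M / 2 := by
    have hpt : ∀ x ∈ Ioo (0:ℝ) 1, w x ≤ 1 + u x / 2 := by
      intro x hx
      exact arith_sqrt_le (w x) (u x) (hw_sq x hx) (hu x hx) (hw_pos x)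
    have hb : IntegrableOn (fun x => 1 + u x / 2) (Ioo (0:ℝ) 1) := (hconst 1).add (hu1.div_const 2)
    have h4 := setIntegral_mono_on hw_int hb measurableSet_Ioo hpt
    have h5 : ∫ x in Ioo (0:ℝ) 1, (1 + u x / 2) = 1 + M / 2 := by
      rw [integral_add (hconst 1) (hu1.div_const 2), integral_div, hMeq]
      simp
    linarith
  obtain ⟨y, hy, hyavg⟩ := exists_le_avg w hw_int
  have hwy : w y ≤ A := by rw [hA_def]; linarith
  -- sup bound via FTC
  have hsup : ∀ x ∈ Ioo (0:ℝ) 1, w x ≤ A + sx * sy / 2 := by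
    intro x hx
    have hsub : uIcc y x ⊆ Ioo (0:ℝ) 1 := Set.ordConnected_Ioo.uIcc_subset hy hx
    have hderiv : ∀ t ∈ uIcc y x, HasDerivAt w (d t / 2 * w t) t := fun t ht =>
      hw_deriv t (hsub ht)
    have hii : IntervalIntegrable (fun t => d t / 2 * w t) volume y x :=
      (hwd_int.mono_set hsub).intervalIntegrable
    have hftc := intervalIntegral.integral_eq_sub_of_hasDerivAt hderiv hii
    have h1 : ∫ t in y..x, d t / 2 * w t ≤ |∫ t in y..x, d t / 2 * w t| := le_abs_self _
    have h2 : |∫ t in y..x, d t / 2 * w t| ≤ ∫ t in Set.uIoc y x, |d t / 2 * w t| := by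
      exact intervalIntegral.norm_integral_le_integral_norm_uIoc
          (f := fun t => d t / 2 * w t) (a := y) (b := x) (μ := volume)
    have h3 : ∫ t in Set.uIoc y x, |d t / 2 * w t| ≤ ∫ t in Ioo (0:ℝ) 1, |d t / 2 * w t| := by
      refine setIntegral_mono_set hwd_int.abs
        (Filter.Eventually.of_forall fun t => abs_nonneg _) ?_
      exact HasSubset.Subset.eventuallyLE (Set.uIoc_subset_uIcc.trans hsub)
    have : w x - w y ≤ sx * sy / 2 := by
      rw [← hftc]
      linarith
    linarith
  -- integral bound on u^2
  have hu2b : ∫ x in Ioo (0:ℝ) 1, u x ^ 2 ≤ (A + sx * sy / 2) ^ 2 * (1 + M) := by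
    have hK0 : 0 ≤ A + sx * sy / 2 := by positivity
    have hpt2 : ∀ x ∈ Ioo (0:ℝ) 1, u x ^ 2 ≤ (A + sx * sy / 2) ^ 2 * w x ^ 2 := by
      intro x hx
      have h2 := hw_sq x hx
      have h3 := hu x hx
      have h4 := hsup x hx
      have h5 := hw_pos x
      have h6 : u x ≤ (A + sx * sy / 2) * w x :=
        arith_u_le (w x) (u x) _ h2 h3 h4 h5
      calc u x ^ 2 ≤ ((A + sx * sy / 2) * w x) ^ 2 := by
            exact pow_le_pow_left₀ h3 h6 2
        _ = (A + sx * sy / 2) ^ 2 * w x ^ 2 := by ring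
    have h7 := setIntegral_mono_on hu2 (hw2_int.const_mul ((A + sx * sy / 2) ^ 2))
      measurableSet_Ioo hpt2
    rw [integral_const_mul, hY] at h7
    exact h7
  -- final algebra
  have ha14 : χ * (1 + M) ^ 2 / 4 < 1 := by rw [ha_def] at ha1; exact ha1
  have hfin := arith_final χ M sx sy X hχ hM0 hsy2 hsx2 hsx0 hsy0 ha14
  have hchain : χ * ∫ x in Ioo (0:ℝ) 1, u x ^ 2 ≤ χ * ((A + sx * sy / 2) ^ 2 * (1 + M)) :=
    mul_le_mul_of_nonneg_left hu2b hχ.le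
  rw [hA_def] at hchain
  rw [ha_def, hA_def]
  linarith
end

section
/- The nonlinear functional inequality ∫₀¹ e^{2m} dx < δ M² ∫₀¹ |m_x|² dx + h_δ(∫₀¹ e^m dx) fails for all sufficiently small δ > 0: for any δ ≤ 1/24 and any continuous function h_δ : [0,∞) → ℝ, there exists m ∈ W^{1,2}(0,1) with ∫₀¹ e^m dx = M for which the inequality does not hold. -/
open MeasureTheory Set

lemma key_integral (ε : ℝ) (hε : 0 < ε) (n : ℤ) (hn : n ≠ -1) :
    ∫ x in (0:ℝ)..1, (x + ε) ^ n = ((1+ε) ^ (n+1) - ε ^ (n+1)) / (n+1) := by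
  have h1 := intervalIntegral.integral_comp_add_right (a := (0:ℝ)) (b := 1) (fun x => x ^ n) ε
  simp only [zero_add] at h1
  have h0 : (0:ℝ) ∉ uIcc ε (1+ε) := by
    rw [Set.uIcc_of_le (by linarith)]
    intro hmem; exact absurd hmem.1 (by linarith)
  rw [h1, integral_zpow (Or.inr ⟨hn, h0⟩)]

/-- For any `M > 0`, any `0 < δ ≤ 1/24` and any continuous `h : [0,∞) → ℝ`, the inequality
`∫₀¹ e^{2m} < δ M² ∫₀¹ |m_x|² + h(∫₀¹ e^m)` fails for some `m ∈ W^{1,2}(0,1)` with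
`∫₀¹ e^m = M`. -/
theorem functional_inequality_fails (M δ : ℝ) (hM : 0 < M) (hδ : 0 < δ)
    (hδ' : δ ≤ 1 / 24) (h : ℝ → ℝ) (hh : ContinuousOn h (Ici 0)) :
    ∃ m m' : ℝ → ℝ,
      (∀ x ∈ Ioo (0:ℝ) 1, HasDerivAt m (m' x) x) ∧
      IntegrableOn (fun x => (m' x) ^ 2) (Ioo 0 1) ∧
      (∫ x in (0:ℝ)..1, Real.exp (m x)) = M ∧
      ¬ ((∫ x in (0:ℝ)..1, Real.exp (2 * m x)) <
          δ * M ^ 2 * (∫ x in (0:ℝ)..1, (m' x) ^ 2) +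
            h (∫ x in (0:ℝ)..1, Real.exp (m x))) := by
  set C : ℝ := max (h M) 1 with hCdef
  have hC : 0 < C := lt_of_lt_of_le one_pos (le_max_right _ _)
  have hhM : h M ≤ C := le_max_left _ _
  set ε : ℝ := min 1 (M^2/(12*C)) with hεdef
  have hε : 0 < ε := lt_min one_pos (by positivity)
  have hε1 : ε ≤ 1 := min_le_left _ _
  have hε2 : 12*C*ε ≤ M^2 := by
    have := min_le_right 1 (M^2/(12*C))
    calc 12*C*ε ≤ 12*C*(M^2/(12*C)) := by
          apply mul_le_mul_of_nonneg_left this (by positivity)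
      _ = M^2 := by field_simp
  set a : ℝ := ε*(1+ε)*M with hadef
  have ha : 0 < a := by positivity
  clear_value a ε C
  clear hεdef hCdef
  have I1 : (∫ x in (0:ℝ)..1, Real.exp (Real.log a - 2 * Real.log (x+ε))) = M := by
    have hcg : ∀ x ∈ uIcc (0:ℝ) 1, Real.exp (Real.log a - 2 * Real.log (x+ε)) = a * (x+ε)^(-2:ℤ) := by
      intro x hx
      rw [Set.uIcc_of_le (by norm_num)] at hx
      have hx0 : 0 < x + ε := by have := hx.1; linarith
      rw [show (2:ℝ) * Real.log (x+ε) = Real.log ((x+ε)^2) by rw [Real.log_pow]; push_cast; ring,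
        Real.exp_sub, Real.exp_log ha, Real.exp_log (by positivity)]
      rw [zpow_neg]
      norm_num [div_eq_mul_inv]
    rw [intervalIntegral.integral_congr hcg, intervalIntegral.integral_const_mul,
      key_integral ε hε (-2) (by norm_num)]
    norm_num
    rw [hadef]
    field_simp
    ring
  refine ⟨fun x => Real.log a - 2 * Real.log (x+ε), fun x => -2/(x+ε), ?_, ?_, ?_, ?_⟩
  · intro x hx
    have hx0 : 0 < x + ε := by have := hx.1; linarith
    have H : HasDerivAt (fun y : ℝ => Real.log (y+ε)) ((x+ε)⁻¹ * 1) x :=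
      by have := (Real.hasDerivAt_log (ne_of_gt hx0)).comp x ((hasDerivAt_id x).add_const ε); exact this
    have H2 := (hasDerivAt_const x (Real.log a)).sub (H.const_mul 2)
    have e : -2/(x+ε) = 0 - 2 * ((x+ε)⁻¹ * 1) := by rw [div_eq_mul_inv]; ring
    rw [← e] at H2; exact H2
  · have hcont : ContinuousOn (fun x : ℝ => (-2/(x+ε))^2) (Icc 0 1) := by
      apply ContinuousOn.pow
      exact continuousOn_const.div (by fun_prop) (fun x hx => by have := hx.1; positivity)
    exact (hcont.integrableOn_Icc).mono_set Set.Ioo_subset_Icc_self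
  · exact I1
  · rw [not_lt]
    rw [I1]
    have I2 : (∫ x in (0:ℝ)..1, Real.exp (2 * (Real.log a - 2 * Real.log (x+ε))))
        = M^2*(1+3*ε+3*ε^2)/(3*(ε*(1+ε))) := by
      have hcg : ∀ x ∈ uIcc (0:ℝ) 1,
          Real.exp (2*(Real.log a - 2 * Real.log (x+ε))) = a^2 * (x+ε)^(-4:ℤ) := by
        intro x hx
        rw [Set.uIcc_of_le (by norm_num)] at hx
        have hx0 : 0 < x + ε := by have := hx.1; linarith
        rw [show (2:ℝ)*(Real.log a - 2 * Real.log (x+ε))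
            = Real.log (a^2) - Real.log ((x+ε)^4) by
          rw [Real.log_pow, Real.log_pow]; push_cast; ring,
          Real.exp_sub, Real.exp_log (by positivity), Real.exp_log (by positivity)]
        rw [zpow_neg]
        norm_num [div_eq_mul_inv]
      rw [intervalIntegral.integral_congr hcg, intervalIntegral.integral_const_mul,
        key_integral ε hε (-4) (by norm_num)]
      norm_num
      rw [hadef]
      field_simp
      ring
    have I3 : (∫ x in (0:ℝ)..1, (-2/(x+ε))^2) = 4/(ε*(1+ε)) := by
      have hcg : ∀ x ∈ uIcc (0:ℝ) 1, (-2/(x+ε))^2 = 4 * (x+ε)^(-2:ℤ) := by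
        intro x hx
        rw [Set.uIcc_of_le (by norm_num)] at hx
        have hx0 : 0 < x + ε := by have := hx.1; linarith
        rw [zpow_neg, div_pow]
        norm_num [div_eq_mul_inv]
        try rfl
      rw [intervalIntegral.integral_congr hcg, intervalIntegral.integral_const_mul,
        key_integral ε hε (-2) (by norm_num)]
      norm_num
      field_simp
      ring
    rw [I2, I3]
    set d : ℝ := ε*(1+ε) with hddef
    have hd : 0 < d := by positivity
    have step1 : δ * M^2 * (4/d) ≤ (1/24) * M^2 * (4/d) := by gcongr
    have step2 : h M ≤ M^2/(6*d) := by
      have hCle : C ≤ M^2/(12*ε) := by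
        rw [le_div_iff₀ (by positivity)]; linarith [hε2]
      have : M^2/(12*ε) ≤ M^2/(6*d) := by
        apply div_le_div_of_nonneg_left (by positivity) (by positivity)
        rw [hddef]; nlinarith
      linarith
    have step3 : (1/24) * M^2 * (4/d) + M^2/(6*d) ≤ M^2*(1+3*ε+3*ε^2)/(3*d) := by
      have e1 : (1/24) * M^2 * (4/d) + M^2/(6*d) = M^2*1/(3*d) := by
        field_simp; ring
      rw [e1]
      gcongr
      nlinarith
    linarith
end

section
/- Let a ∈ C¹(0,∞) ∩ L¹(0,∞) with a ≥ 0, and suppose sup_{r ∈ (0,1)} r ∫_r^∞ a(s) ds < ∞. Then there exists a concave function B ∈ C[0,∞) such that B(r) ≥ r ∫_r^∞ a(s) ds for all r ≥ 0 and lim_{r→∞} B(r)/r = 0. -/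
open MeasureTheory Set Filter

/-- If `a ∈ C¹(0,∞) ∩ L¹(0,∞)` is nonnegative and `r ↦ r ∫_r^∞ a` is bounded on `(0,1)`,
then there exists a concave continuous `B : [0,∞) → ℝ` with `B(r) ≥ r ∫_r^∞ a(s) ds`
for all `r ≥ 0` and `B(r)/r → 0` as `r → ∞`. -/
theorem concave_sublinear_majorant (a : ℝ → ℝ)
    (hC1 : ContDiffOn ℝ 1 a (Ioi 0))
    (hint : IntegrableOn a (Ioi 0))
    (hpos : ∀ r ∈ Ioi (0:ℝ), 0 ≤ a r)
    (hbdd : ∃ K : ℝ, ∀ r ∈ Ioo (0:ℝ) 1, r * ∫ s in Ioi r, a s ≤ K) :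
    ∃ B : ℝ → ℝ,
      ContinuousOn B (Ici 0) ∧
      ConcaveOn ℝ (Ici 0) B ∧
      (∀ r : ℝ, 0 ≤ r → r * ∫ s in Ioi r, a s ≤ B r) ∧
      Tendsto (fun r => B r / r) atTop (nhds 0) := by
  set M : ℝ := ∫ s in Ioi (0:ℝ), a s with hM
  set g : ℝ → ℝ := fun r => ∫ s in Ioi (max r 0), a s with hg
  -- a.e. nonnegativity of a on tails
  have hae : ∀ r : ℝ, 0 ≤ r → 0 ≤ᵐ[volume.restrict (Ioi r)] a := by
    intro r hr
    filter_upwards [ae_restrict_mem measurableSet_Ioi] with x hx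
    exact hpos x (lt_of_le_of_lt hr hx)
  have hsub : ∀ r : ℝ, Ioi (max r 0) ⊆ Ioi (0:ℝ) := fun r =>
    Ioi_subset_Ioi (le_max_right r 0)
  have hint' : ∀ r : ℝ, IntegrableOn a (Ioi (max r 0)) := fun r =>
    hint.mono_set (hsub r)
  have hg_anti : Antitone g := by
    intro r₁ r₂ h
    exact setIntegral_mono_set (hint' r₁) (hae _ (le_max_right _ _))
      ((Ioi_subset_Ioi (max_le_max h le_rfl)).eventuallyLE)
  have hg_nonneg : ∀ r, 0 ≤ g r := by
    intro r
    refine setIntegral_nonneg measurableSet_Ioi fun x hx => hpos x ?_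
    exact lt_of_le_of_lt (le_max_right r 0) hx
  have hg_le : ∀ r, g r ≤ M := by
    intro r
    exact setIntegral_mono_set hint (hae 0 le_rfl) ((hsub r).eventuallyLE)
  have hg_int : ∀ x y : ℝ, IntervalIntegrable g volume x y := fun x y =>
    hg_anti.intervalIntegrable
  set B : ℝ → ℝ := fun r => ∫ s in (0:ℝ)..r, g s with hB
  have hB_sub : ∀ x y : ℝ, B y - B x = ∫ s in x..y, g s := by
    intro x y
    have := intervalIntegral.integral_add_adjacent_intervals (hg_int 0 x) (hg_int x y)
    simp only [hB]
    linarith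
  -- lower bound : B r ≥ r * g r for r ≥ 0
  have hB_lower : ∀ r : ℝ, 0 ≤ r → r * g r ≤ B r := by
    intro r hr
    have : ∫ s in (0:ℝ)..r, g r ≤ ∫ s in (0:ℝ)..r, g s := by
      refine intervalIntegral.integral_mono_on hr (intervalIntegrable_const) (hg_int 0 r) ?_
      intro x hx
      exact hg_anti hx.2
    simpa [intervalIntegral.integral_const, smul_eq_mul, mul_comm] using this
  -- upper bound between points : B y - B x ≤ (y - x) * g x for x ≤ y
  have hB_upper : ∀ x y : ℝ, x ≤ y → B y - B x ≤ (y - x) * g x := by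
    intro x y hxy
    rw [hB_sub]
    have : ∫ s in x..y, g s ≤ ∫ s in x..y, g x := by
      refine intervalIntegral.integral_mono_on hxy (hg_int x y) intervalIntegrable_const ?_
      intro t ht
      exact hg_anti ht.1
    simpa [intervalIntegral.integral_const, smul_eq_mul, mul_comm] using this
  have hB_lower' : ∀ x y : ℝ, x ≤ y → (y - x) * g y ≤ B y - B x := by
    intro x y hxy
    rw [hB_sub]
    have : ∫ s in x..y, g y ≤ ∫ s in x..y, g s := by
      refine intervalIntegral.integral_mono_on hxy intervalIntegrable_const (hg_int x y) ?_
      intro t ht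
      exact hg_anti ht.2
    simpa [intervalIntegral.integral_const, smul_eq_mul, mul_comm] using this
  -- continuity (Lipschitz)
  have hM0 : 0 ≤ M := le_trans (hg_nonneg 0) (hg_le 0)
  have hBcont : Continuous B := by
    have : LipschitzWith ⟨M, hM0⟩ B := by
      refine LipschitzWith.of_dist_le_mul fun x y => ?_
      rw [Real.dist_eq, Real.dist_eq]
      have h1 : B x - B y = ∫ s in y..x, g s := hB_sub y x
      have h2 : |∫ s in y..x, g s| ≤ M * |x - y| := by
        have := intervalIntegral.norm_integral_le_of_norm_le_const
          (C := M) (f := g) (a := y) (b := x) (fun t _ => by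
            rw [Real.norm_eq_abs, abs_of_nonneg (hg_nonneg t)]; exact hg_le t)
        simpa [Real.norm_eq_abs, abs_sub_comm x y] using this
      rw [h1]
      exact h2
    exact this.continuous
  -- concavity
  have hBconc : ConcaveOn ℝ (Ici 0) B := by
    refine concaveOn_of_slope_anti_adjacent (convex_Ici 0) ?_
    intro x y z _ _ hxy hyz
    have h1 : (B z - B y) / (z - y) ≤ g y := by
      rw [div_le_iff₀ (by linarith)]
      have := hB_upper y z hyz.le
      linarith [this]
    have h2 : g y ≤ (B y - B x) / (y - x) := by
      rw [le_div_iff₀ (by linarith)]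
      have := hB_lower' x y hxy.le
      linarith [this]
    linarith
  -- tail tendsto 0
  have hg_tendsto : Tendsto g atTop (nhds 0) := by
    have ht : Tendsto (fun r : ℝ => ∫ s in (0:ℝ)..r, a s) atTop (nhds M) :=
      intervalIntegral_tendsto_integral_Ioi 0 hint tendsto_id
    have heq : ∀ᶠ r : ℝ in atTop, M - ∫ s in (0:ℝ)..r, a s = g r := by
      filter_upwards [eventually_ge_atTop (0:ℝ)] with r hr
      have hmax : max r 0 = r := max_eq_left hr
      have hunion : Ioc (0:ℝ) r ∪ Ioi r = Ioi 0 := Ioc_union_Ioi_eq_Ioi hr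
      have hdisj : Disjoint (Ioc (0:ℝ) r) (Ioi r) := Ioc_disjoint_Ioi le_rfl
      have hsplit : M = (∫ s in Ioc (0:ℝ) r, a s) + ∫ s in Ioi r, a s := by
        rw [hM, ← hunion]
        exact setIntegral_union hdisj measurableSet_Ioi
          (hint.mono_set (by rw [← hunion]; exact subset_union_left))
          (hint.mono_set (by rw [← hunion]; exact subset_union_right))
      rw [intervalIntegral.integral_of_le hr]
      simp only [hg, hmax]
      linarith
    have : Tendsto (fun r : ℝ => M - ∫ s in (0:ℝ)..r, a s) atTop (nhds (M - M)) :=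
      tendsto_const_nhds.sub ht
    rw [sub_self] at this
    exact this.congr' heq
  -- B r / r → 0
  have hB_nonneg : ∀ r : ℝ, 0 ≤ r → 0 ≤ B r := by
    intro r hr
    have := hB_lower r hr
    nlinarith [hg_nonneg r]
  have htend : Tendsto (fun r => B r / r) atTop (nhds 0) := by
    rw [Metric.tendsto_atTop]
    intro ε hε
    obtain ⟨R₀, hR₀⟩ := (Metric.tendsto_atTop.1 hg_tendsto) (ε / 2) (by linarith)
    set R : ℝ := max R₀ 0 with hR
    have hgR : g R < ε / 2 := by
      have := hR₀ R (le_max_left _ _)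
      rw [Real.dist_eq, sub_zero, abs_of_nonneg (hg_nonneg R)] at this
      exact this
    refine ⟨max (max R 1) (2 * B R / ε + 1), fun r hr => ?_⟩
    have hrR : R ≤ r := le_trans (le_trans (le_max_left R 1) (le_max_left _ _)) hr
    have hr1 : (1:ℝ) ≤ r := le_trans (le_trans (le_max_right R 1) (le_max_left _ _)) hr
    have hr0 : (0:ℝ) < r := by linarith
    have hrB : 2 * B R / ε + 1 ≤ r := le_trans (le_max_right _ _) hr
    have hBR0 : 0 ≤ B R := hB_nonneg R (le_max_right _ _)
    -- B r ≤ B R + (r - R) * g R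
    have hub : B r ≤ B R + (r - R) * g R := by
      have := hB_upper R r hrR
      linarith
    have h1 : (r - R) * g R ≤ r * (ε / 2) := by
      have h0R : (0:ℝ) ≤ R := le_max_right _ _
      nlinarith [hg_nonneg R]
    have key : ε * (2 * B R / ε) + ε ≤ ε * r := by
      have := mul_le_mul_of_nonneg_left hrB hε.le
      rw [mul_add, mul_one] at this
      exact this
    have key2 : ε * (2 * B R / ε) = 2 * B R := by field_simp
    have h2 : B R < ε / 2 * r := by linarith
    have hBr : B r / r < ε := by
      rw [div_lt_iff₀ hr0]
      linarith
    rw [Real.dist_eq, sub_zero, abs_of_nonneg (div_nonneg (hB_nonneg r (by linarith)) hr0.le)]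
    exact hBr
  refine ⟨B, hBcont.continuousOn, hBconc, ?_, htend⟩
  intro r hr
  have hmax : max r 0 = r := max_eq_left hr
  have := hB_lower r hr
  simpa [hg, hmax] using this
end

section
/- Let B : [0,∞) → [0,∞) be concave with B(0) ≥ 0, let u : (0,1) → [0,∞) be integrable with ∫₀¹ u = M, let U(x) = ∫₀^x u, and let L = (1/q)∫₀¹ U^q for some q > 2. Then ∫₀¹ U^{q−2} B(u) dx ≤ (qL)^{(q−2)/q} B(M)^{2/q} B(M^{q+1}/((q+1)qL))^{(q−2)/q}, where the last argument uses ∫₀¹ u U^q dx = U(1)^{q+1}/(q+1) = M^{q+1}/(q+1). -/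
open MeasureTheory Set

lemma concave_nonneg_mono {B : ℝ → ℝ} (hB : ConcaveOn ℝ (Ici 0) B)
    (hBpos : ∀ x : ℝ, 0 ≤ x → 0 ≤ B x) {a b : ℝ} (ha : 0 ≤ a) (hab : a ≤ b) :
    B a ≤ B b := by
  rcases eq_or_lt_of_le hab with rfl | hab'
  · exact le_rfl
  by_contra hlt
  push_neg at hlt
  have hb : 0 ≤ b := le_trans ha hab
  have hD : 0 < B a - B b := by linarith
  set t : ℝ := (B b + 1) / (B a - B b) with ht
  have hBb : 0 ≤ B b := hBpos b hb
  have htpos : 0 < t := div_pos (by linarith) hD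
  set z : ℝ := b + t * (b - a) with hz
  have hbz : b < z := by nlinarith
  have hz0 : (0:ℝ) ≤ z := by linarith
  have key := hB.slope_anti_adjacent ha hz0 hab' hbz
  have h1 : (B z - B b) * (b - a) ≤ (B b - B a) * (z - b) :=
    (div_le_div_iff₀ (by linarith) (by linarith)).1 key
  have h2 : (B b - B a) * (z - b) = -((B b + 1) * (b - a)) := by
    have : z - b = t * (b - a) := by ring
    rw [this, ht]
    field_simp
    ring
  rw [h2] at h1
  have hz' : B z ≤ -1 := by nlinarith
  have := hBpos z hz0
  linarith

lemma concave_supporting_line {B : ℝ → ℝ} (hB : ConcaveOn ℝ (Ici 0) B)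
    (hBpos : ∀ x : ℝ, 0 ≤ x → 0 ≤ B x) {p : ℝ} (hp : 0 < p) :
    ∃ c : ℝ, 0 ≤ c ∧ ∀ x : ℝ, 0 ≤ x → B x ≤ B p + c * (x - p) := by
  set S : Set ℝ := (fun y => (B y - B p) / (y - p)) '' Ioi p with hS
  have hne : S.Nonempty := ⟨_, mem_image_of_mem _ (by simp : p + 1 ∈ Ioi p)⟩
  have hbdd : BddAbove S := by
    refine ⟨(B p - B (p / 2)) / (p - p / 2), ?_⟩
    rintro s ⟨y, hy, rfl⟩
    exact hB.slope_anti_adjacent (mem_Ici.2 (by positivity)) (mem_Ici.2 (le_of_lt (lt_trans hp hy))) (by linarith) hy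
  refine ⟨sSup S, ?_, ?_⟩
  · have h1 : (B (p + 1) - B p) / (p + 1 - p) ≤ sSup S :=
      le_csSup hbdd (mem_image_of_mem _ (by simp : p + 1 ∈ Ioi p))
    have h2 : 0 ≤ (B (p + 1) - B p) / (p + 1 - p) := by
      have := concave_nonneg_mono hB hBpos hp.le (by linarith : p ≤ p + 1)
      apply div_nonneg <;> linarith
    linarith
  · intro x hx
    rcases lt_trichotomy x p with hxp | rfl | hpx
    · have hc : sSup S ≤ (B p - B x) / (p - x) := by
        apply csSup_le hne
        rintro s ⟨y, hy, rfl⟩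
        exact hB.slope_anti_adjacent hx (le_of_lt (lt_trans hp hy)) hxp hy
      have h2 : sSup S * (p - x) ≤ B p - B x := (le_div_iff₀ (by linarith)).1 hc
      nlinarith
    · simp
    · have hc : (B x - B p) / (x - p) ≤ sSup S := le_csSup hbdd ⟨x, hpx, rfl⟩
      have h2 : B x - B p ≤ sSup S * (x - p) := (div_le_iff₀ (by linarith)).1 hc
      linarith
/-- Jensen-type estimate: if `B : [0,∞) → [0,∞)` is concave, `u ≥ 0` is integrable on
`(0,1)` with `∫₀¹ u = M > 0`, `U(x) = ∫₀^x u` and `L = (1/q)∫₀¹ U^q` with `q > 2`, then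
`∫₀¹ U^{q−2} B(u) ≤ (qL)^{(q−2)/q} B(M)^{2/q} B(M^{q+1}/((q+1)qL))^{(q−2)/q}`. -/
theorem jensen_moment_estimate (B u : ℝ → ℝ) (M q L : ℝ)
    (hq : 2 < q) (hM : 0 < M)
    (hBconc : ConcaveOn ℝ (Ici 0) B)
    (hBpos : ∀ x : ℝ, 0 ≤ x → 0 ≤ B x)
    (hu : ∀ x ∈ Ioo (0:ℝ) 1, 0 ≤ u x)
    (huint : IntegrableOn u (Ioo 0 1))
    (hmass : (∫ x in (0:ℝ)..1, u x) = M)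
    (hBu : IntegrableOn (fun x => B (u x)) (Ioo 0 1))
    (hL : L = (1 / q) * ∫ x in (0:ℝ)..1, (∫ z in (0:ℝ)..x, u z) ^ q) :
    (∫ x in (0:ℝ)..1, (∫ z in (0:ℝ)..x, u z) ^ (q - 2) * B (u x)) ≤
      (q * L) ^ ((q - 2) / q) * (B M) ^ (2 / q) *
        (B (M ^ (q + 1) / ((q + 1) * q * L))) ^ ((q - 2) / q) := by
  have hq0 : (0:ℝ) < q := by linarith
  have hq2 : (0:ℝ) < q - 2 := by linarith
  set U : ℝ → ℝ := fun x => ∫ z in (0:ℝ)..x, u z with hUdef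
  set μ : Measure ℝ := volume.restrict (Ioo 0 1) with hμdef
  -- basic integrability
  have hres : volume.restrict (Ioo (0:ℝ) 1) = volume.restrict (Icc 0 1) :=
    Measure.restrict_congr_set Ioo_ae_eq_Icc
  have huIcc : IntegrableOn u (Icc 0 1) := by
    rw [IntegrableOn, ← hres]; exact huint
  have hii : ∀ {a b : ℝ}, 0 ≤ a → a ≤ b → b ≤ 1 → IntervalIntegrable u volume a b := by
    intro a b ha hab hb
    apply IntegrableOn.intervalIntegrable
    apply huIcc.mono_set
    rw [uIcc_of_le hab]
    exact Icc_subset_Icc ha hb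
  have huae : 0 ≤ᵐ[volume.restrict (Icc (0:ℝ) 1)] u := by
    rw [← hres]
    exact (ae_restrict_iff' measurableSet_Ioo).2 (ae_of_all _ hu)
  have huaeμ : 0 ≤ᵐ[μ] u := (ae_restrict_iff' measurableSet_Ioo).2 (ae_of_all _ hu)
  -- basic facts about U
  have hU0 : U 0 = 0 := intervalIntegral.integral_same
  have hU1 : U 1 = M := hmass
  have hUadd : ∀ a ∈ Icc (0:ℝ) 1, U a + ∫ z in a..1, u z = M := by
    intro a ha
    rw [hUdef]
    rw [intervalIntegral.integral_add_adjacent_intervals (hii le_rfl ha.1 ha.2) (hii ha.1 ha.2 le_rfl)]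
    exact hmass
  have hUmono : MonotoneOn U (Icc 0 1) := by
    intro a ha b hb hab
    have h1 : U a + ∫ z in a..b, u z = U b := by
      rw [hUdef]
      exact intervalIntegral.integral_add_adjacent_intervals (hii le_rfl ha.1 ha.2)
        (hii ha.1 hab hb.2)
    have h2 : 0 ≤ ∫ z in a..b, u z := by
      rw [intervalIntegral.integral_of_le hab]
      have hsubset : Ioc a b ⊆ Icc (0:ℝ) 1 := fun x hx =>
        ⟨le_trans ha.1 hx.1.le, le_trans hx.2 hb.2⟩
      exact setIntegral_nonneg_of_ae_restrict
        (ae_restrict_of_ae_restrict_of_subset hsubset huae)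
    linarith
  have hUcont : ContinuousOn U (Icc 0 1) := by
    have h := intervalIntegral.continuousOn_primitive_interval (a := (0:ℝ)) (b := 1)
      (f := u) (μ := volume) (by rw [uIcc_of_le zero_le_one]; exact huIcc)
    rwa [uIcc_of_le zero_le_one] at h
  have hUnn : ∀ x ∈ Icc (0:ℝ) 1, 0 ≤ U x := by
    intro x hx
    have := hUmono (left_mem_Icc.2 zero_le_one) hx hx.1
    rwa [hU0] at this
  have hUleM : ∀ x ∈ Icc (0:ℝ) 1, U x ≤ M := by
    intro x hx
    have := hUmono hx (right_mem_Icc.2 zero_le_one) hx.2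
    rwa [hU1] at this
  have haemem : ∀ᵐ x ∂μ, x ∈ Ioo (0:ℝ) 1 := ae_restrict_mem measurableSet_Ioo
  have hrpow : ∀ r : ℝ, 0 < r → Continuous fun y : ℝ => y ^ r := fun r hr =>
    continuous_iff_continuousAt.2 fun y => Real.continuousAt_rpow_const y r (Or.inr hr.le)
  have hUmeas : AEStronglyMeasurable U μ :=
    (hUcont.mono Ioo_subset_Icc_self).aestronglyMeasurable measurableSet_Ioo
  have hUqIcc : IntegrableOn (fun x => U x ^ q) (Icc 0 1) :=
    ((hrpow q hq0).comp_continuousOn hUcont).integrableOn_Icc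
  have hUqint : Integrable (fun x => U x ^ q) μ := hUqIcc.mono_set Ioo_subset_Icc_self
  have hBuμ : Integrable (fun x => B (u x)) μ := hBu
  have hBunn : ∀ᵐ x ∂μ, 0 ≤ B (u x) := by
    filter_upwards [haemem] with x hx
    exact hBpos _ (hu x hx)
  have hUqbd : ∀ᵐ x ∂μ, ‖U x ^ q‖ ≤ M ^ q := by
    filter_upwards [haemem] with x hx
    rw [Real.norm_of_nonneg (Real.rpow_nonneg (hUnn x (Ioo_subset_Icc_self hx)) q)]
    exact Real.rpow_le_rpow (hUnn x (Ioo_subset_Icc_self hx)) (hUleM x (Ioo_subset_Icc_self hx)) hq0.le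
  have hUqmeas : AEStronglyMeasurable (fun x => U x ^ q) μ :=
    ((hrpow q hq0).comp_aestronglyMeasurable hUmeas)
  have hUqBu : Integrable (fun x => U x ^ q * B (u x)) μ :=
    hBuμ.bdd_mul hUqmeas hUqbd
  have huUq : Integrable (fun x => u x * U x ^ q) μ := by
    apply (huint.bdd_mul hUqmeas hUqbd).congr
    exact ae_of_all _ fun x => mul_comm _ _
  -- mass in set-integral form
  have hmassμ : ∫ x, u x ∂μ = M := by
    rw [hμdef, ← integral_Ioc_eq_integral_Ioo, ← intervalIntegral.integral_of_le zero_le_one]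
    exact hmass
  -- value of q*L
  have hqL : q * L = ∫ x, U x ^ q ∂μ := by
    rw [hL, hμdef, ← integral_Ioc_eq_integral_Ioo, ← intervalIntegral.integral_of_le zero_le_one]
    field_simp
    rfl
  -- positivity of ∫ U^q
  have hApos : 0 < ∫ x, U x ^ q ∂μ := by
    obtain ⟨x0, hx0, hUx0⟩ := intermediate_value_Icc zero_le_one hUcont
      (show M / 2 ∈ Icc (U 0) (U 1) by rw [hU0, hU1]; constructor <;> linarith)
    have hx01 : x0 < 1 := by
      rcases lt_or_eq_of_le hx0.2 with h | h
      · exact h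
      · rw [h] at hUx0; rw [hU1] at hUx0; linarith
    have hsub : Ioo x0 1 ⊆ Ioo (0:ℝ) 1 := fun x hx => ⟨lt_of_le_of_lt hx0.1 hx.1, hx.2⟩
    have h1 : (M / 2) ^ q * (volume (Ioo x0 1)).toReal ≤ ∫ x in Ioo x0 1, U x ^ q := by
      apply setIntegral_ge_of_const_le_real measurableSet_Ioo
      · rw [Real.volume_Ioo]; exact ENNReal.ofReal_ne_top
      · intro x hx
        have hxmem : x ∈ Icc (0:ℝ) 1 := Ioo_subset_Icc_self (hsub hx)
        have : M / 2 ≤ U x := by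
          rw [← hUx0]; exact hUmono hx0 hxmem hx.1.le
        exact Real.rpow_le_rpow (by positivity) this hq0.le
      · exact hUqIcc.mono_set (hsub.trans Ioo_subset_Icc_self)
    have h2 : ∫ x in Ioo x0 1, U x ^ q ≤ ∫ x, U x ^ q ∂μ := by
      rw [hμdef]
      apply setIntegral_mono_set hUqint
      · filter_upwards [haemem] with x hx
        exact Real.rpow_nonneg (hUnn x (Ioo_subset_Icc_self hx)) q
      · exact HasSubset.Subset.eventuallyLE hsub
    have h3 : 0 < (M / 2) ^ q * (volume (Ioo x0 1)).toReal := by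
      apply mul_pos (Real.rpow_pos_of_pos (by linarith) q)
      rw [Real.volume_Ioo, ENNReal.toReal_ofReal (by linarith)]
      linarith
    linarith
  have hL0 : 0 < q * L := by rw [hqL]; exact hApos
  set m0 : ℝ := M ^ (q + 1) / ((q + 1) * q * L) with hm0def
  have hm0 : 0 < m0 := by
    apply div_pos (Real.rpow_pos_of_pos hM _)
    have : (0:ℝ) < q + 1 := by linarith
    calc (0:ℝ) < (q+1) * (q * L) := by positivity
    _ = (q+1) * q * L := by ring
  have hm0A : m0 * (q * L) = M ^ (q + 1) / (q + 1) := by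
    rw [hm0def, div_mul_eq_mul_div, show (q + 1) * q * L = (q + 1) * (q * L) by ring,
      mul_div_mul_right _ _ hL0.ne']
  -- Step A : Jensen for ∫ B(u)
  have hIA : ∫ x, B (u x) ∂μ ≤ B M := by
    obtain ⟨c, hc0, hcl⟩ := concave_supporting_line hBconc hBpos hM
    have hint2 : Integrable (fun x => B M + c * (u x - M)) μ :=
      (integrable_const _).add ((huint.sub (integrable_const _)).const_mul c)
    have h1 : Integrable (fun x => c * (u x - M)) μ := by
      exact (huint.sub (integrable_const M)).const_mul c
    have hmono : ∫ x, B (u x) ∂μ ≤ ∫ x, (B M + c * (u x - M)) ∂μ := by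
      apply integral_mono_ae hBuμ hint2
      filter_upwards [haemem] with x hx
      exact hcl (u x) (hu x hx)
    have hμuniv : μ.real univ = 1 := by
      simp [hμdef, Real.volume_Ioo, Measure.real]
    have h2 : Integrable (fun x => u x - M) μ := huint.sub (integrable_const M)
    rw [integral_add (integrable_const _) h1, integral_const_mul,
        integral_sub huint (integrable_const _),
        integral_const, integral_const, hmassμ, ← hμdef, hμuniv] at hmono
    simpa using hmono
  have hIAnn : 0 ≤ ∫ x, B (u x) ∂μ := integral_nonneg_of_ae hBunn
  -- Step C : key layercake bound
  have hJ : ∫ x, u x * U x ^ q ∂μ ≤ M ^ (q + 1) / (q + 1) := by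
    set w : ℝ → ENNReal := fun x => ENNReal.ofReal (u x) with hwdef
    set ν : Measure ℝ := μ.withDensity w with hνdef
    have hw : AEMeasurable w μ :=
      ENNReal.measurable_ofReal.comp_aemeasurable huint.aemeasurable
    have hac : ν ≪ μ := withDensity_absolutelyContinuous μ w
    have hνcompl : ν (Ioo (0:ℝ) 1)ᶜ = 0 := by
      apply hac
      rw [hμdef, Measure.restrict_apply measurableSet_Ioo.compl]
      simp
    have hUμnn : 0 ≤ᵐ[μ] U := by
      filter_upwards [haemem] with x hx
      exact hUnn x (Ioo_subset_Icc_self hx)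
    have hUνnn : 0 ≤ᵐ[ν] U := hUμnn.filter_mono hac.ae_le
    have hUν : AEMeasurable U ν := hUmeas.aemeasurable.mono_ac hac
    set g : ℝ → ℝ := fun t => q * t ^ (q - 1) with hgdef
    have hgcont : Continuous g := continuous_const.mul (hrpow (q - 1) (by linarith))
    have hgint : ∀ t > 0, IntervalIntegrable g volume 0 t := fun t _ =>
      hgcont.intervalIntegrable _ _
    have hgnnIoi : ∀ᵐ t ∂volume.restrict (Ioi (0:ℝ)), 0 ≤ g t := by
      filter_upwards [ae_restrict_mem measurableSet_Ioi] with t ht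
      exact mul_nonneg hq0.le (Real.rpow_nonneg (le_of_lt ht) _)
    have layer := lintegral_comp_eq_lintegral_meas_lt_mul ν hUνnn hUν hgint hgnnIoi
    have hprim : ∀ s : ℝ, 0 ≤ s → (∫ t in (0:ℝ)..s, g t) = s ^ q := by
      intro s hs
      have e1 : q - 1 + 1 = q := by ring
      rw [hgdef]
      rw [intervalIntegral.integral_const_mul,
        integral_rpow (Or.inl (by linarith : (-1:ℝ) < q - 1)), e1,
        Real.zero_rpow hq0.ne', sub_zero, mul_div_cancel₀ _ hq0.ne']
    have hLHS : ∫⁻ ω, ENNReal.ofReal (∫ t in (0:ℝ)..U ω, g t) ∂ν =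
        ∫⁻ ω, ENNReal.ofReal (U ω ^ q) ∂ν := by
      apply lintegral_congr_ae
      filter_upwards [hUνnn] with x hx
      rw [hprim (U x) hx]
    have hUqae : AEMeasurable (fun x => ENNReal.ofReal (U x ^ q)) μ :=
      ENNReal.measurable_ofReal.comp_aemeasurable hUqmeas.aemeasurable
    have hwd : ∫⁻ ω, ENNReal.ofReal (U ω ^ q) ∂ν =
        ∫⁻ x, ENNReal.ofReal (u x * U x ^ q) ∂μ := by
      rw [hνdef, lintegral_withDensity_eq_lintegral_mul₀ hw hUqae]
      apply lintegral_congr_ae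
      filter_upwards [huaeμ] with x hx
      simp only [Pi.mul_apply, hwdef]
      rw [← ENNReal.ofReal_mul hx]
    have hJof : ENNReal.ofReal (∫ x, u x * U x ^ q ∂μ) =
        ∫⁻ x, ENNReal.ofReal (u x * U x ^ q) ∂μ := by
      apply ofReal_integral_eq_lintegral_ofReal huUq
      filter_upwards [haemem, huaeμ] with x h1 h2
      exact mul_nonneg h2 (Real.rpow_nonneg (hUnn x (Ioo_subset_Icc_self h1)) q)
    have hmeasb : ∀ t : ℝ, 0 < t → ν {a | t < U a} ≤ ENNReal.ofReal (M - t) := by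
      intro t ht
      have hsplit : ν {a | t < U a} ≤ ν ({a | t < U a} ∩ Ioo 0 1) + ν (Ioo (0:ℝ) 1)ᶜ := by
        refine le_trans (measure_mono ?_) (measure_union_le _ _)
        intro x hx
        by_cases h : x ∈ Ioo (0:ℝ) 1
        · exact Or.inl ⟨hx, h⟩
        · exact Or.inr h
      rw [hνcompl, add_zero] at hsplit
      rcases le_or_gt M t with hMt | htM
      · have hempty : {a | t < U a} ∩ Ioo (0:ℝ) 1 = ∅ := by
          ext x
          simp only [mem_inter_iff, mem_setOf_eq, mem_empty_iff_false, iff_false, not_and]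
          intro hxU hx
          exact absurd hxU (not_lt.2 (le_trans (hUleM x (Ioo_subset_Icc_self hx)) hMt))
        rw [hempty, measure_empty] at hsplit
        exact le_trans hsplit zero_le
      · obtain ⟨xt, hxt, hUxt⟩ := intermediate_value_Icc zero_le_one hUcont
          (show t ∈ Icc (U 0) (U 1) by rw [hU0, hU1]; exact ⟨ht.le, htM.le⟩)
        have hsub : {a | t < U a} ∩ Ioo (0:ℝ) 1 ⊆ Ioo xt 1 := by
          rintro x ⟨hxU, hx⟩
          refine ⟨?_, hx.2⟩
          by_contra hle
          push_neg at hle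
          have := hUmono (Ioo_subset_Icc_self hx) hxt hle
          rw [hUxt] at this
          exact absurd hxU (not_lt.2 this)
        have hIoosub : Ioo xt 1 ⊆ Ioo (0:ℝ) 1 := fun x hx =>
          ⟨lt_of_le_of_lt hxt.1 hx.1, hx.2⟩
        have hsubIcc : Ioo xt 1 ⊆ Icc (0:ℝ) 1 := hIoosub.trans Ioo_subset_Icc_self
        have hν2 : ν (Ioo xt 1) = ENNReal.ofReal (M - t) := by
          rw [hνdef, withDensity_apply _ measurableSet_Ioo, hμdef,
            Measure.restrict_restrict measurableSet_Ioo, inter_eq_left.2 hIoosub]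
          rw [hwdef]
          rw [← ofReal_integral_eq_lintegral_ofReal (huIcc.mono_set hsubIcc)
            (ae_restrict_of_ae_restrict_of_subset hsubIcc huae)]
          congr 1
          rw [← integral_Ioc_eq_integral_Ioo, ← intervalIntegral.integral_of_le hxt.2]
          have h5 := hUadd xt hxt
          rw [hUxt] at h5
          linarith
        calc ν {a | t < U a} ≤ ν (Ioo xt 1) := le_trans hsplit (measure_mono hsub)
          _ = ENNReal.ofReal (M - t) := hν2
    have hRHS : ∫⁻ t in Ioi (0:ℝ), ν {a | t < U a} * ENNReal.ofReal (g t) ≤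
        ENNReal.ofReal (M ^ (q + 1) / (q + 1)) := by
      have step1 : ∫⁻ t in Ioi (0:ℝ), ν {a | t < U a} * ENNReal.ofReal (g t) ≤
          ∫⁻ t in Ioi (0:ℝ), ENNReal.ofReal (M - t) * ENNReal.ofReal (g t) := by
        apply lintegral_mono_ae
        filter_upwards [ae_restrict_mem measurableSet_Ioi] with t ht
        exact mul_le_mul_left (hmeasb t ht) _
      have e0 : Ioi (0:ℝ) = Ioc 0 M ∪ Ioi M := (Ioc_union_Ioi_eq_Ioi hM.le).symm
      have step2 : ∫⁻ t in Ioi (0:ℝ), ENNReal.ofReal (M - t) * ENNReal.ofReal (g t) =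
          ∫⁻ t in Ioc 0 M, ENNReal.ofReal (M - t) * ENNReal.ofReal (g t) := by
        rw [e0, lintegral_union measurableSet_Ioi (Ioc_disjoint_Ioi le_rfl)]
        have hz : ∫⁻ t in Ioi M, ENNReal.ofReal (M - t) * ENNReal.ofReal (g t) = 0 := by
          rw [setLIntegral_congr_fun measurableSet_Ioi (fun t ht => by
              rw [ENNReal.ofReal_of_nonpos (by linarith [mem_Ioi.1 ht] : M - t ≤ 0), zero_mul]), lintegral_zero]
        rw [hz, add_zero]
      have hgint2 : IntegrableOn (fun t => (M - t) * g t) (Ioc 0 M) := by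
        apply Continuous.integrableOn_Ioc
        exact (continuous_const.sub continuous_id).mul hgcont
      have hgnn2 : 0 ≤ᵐ[volume.restrict (Ioc 0 M)] fun t => (M - t) * g t := by
        filter_upwards [ae_restrict_mem measurableSet_Ioc] with t ht
        exact mul_nonneg (by linarith [ht.2]) (mul_nonneg hq0.le
          (Real.rpow_nonneg ht.1.le _))
      have step3 : ∫⁻ t in Ioc 0 M, ENNReal.ofReal (M - t) * ENNReal.ofReal (g t) =
          ENNReal.ofReal (∫ t in Ioc 0 M, (M - t) * g t) := by
        rw [ofReal_integral_eq_lintegral_ofReal hgint2 hgnn2]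
        apply lintegral_congr_ae
        filter_upwards [ae_restrict_mem measurableSet_Ioc] with t ht
        rw [ENNReal.ofReal_mul (by linarith [ht.2] : (0:ℝ) ≤ M - t)]
      have step4 : (∫ t in Ioc 0 M, (M - t) * g t) = M ^ (q + 1) / (q + 1) := by
        rw [← intervalIntegral.integral_of_le hM.le]
        have heq : EqOn (fun t => (M - t) * g t)
            (fun t => q * M * t ^ (q - 1) - q * t ^ q) (uIcc 0 M) := by
          intro t ht
          rw [uIcc_of_le hM.le] at ht
          simp only [hgdef]
          rcases eq_or_lt_of_le ht.1 with rfl | ht0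
          · simp [Real.zero_rpow (by linarith : q - 1 ≠ 0), Real.zero_rpow hq0.ne']
          · have htq : t ^ q = t ^ (q - 1) * t := by
              have e : q = q - 1 + 1 := by ring
              rw [e]
              rw [Real.rpow_add_one (ne_of_gt ht0)]
              rw [← e]
            rw [htq]; ring
        rw [intervalIntegral.integral_congr heq]
        have c1 : Continuous fun t : ℝ => q * M * t ^ (q - 1) :=
          continuous_const.mul (hrpow (q - 1) (by linarith))
        have c2 : Continuous fun t : ℝ => q * t ^ q :=
          continuous_const.mul (hrpow q hq0)
        rw [intervalIntegral.integral_sub (c1.intervalIntegrable _ _)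
          (c2.intervalIntegrable _ _), intervalIntegral.integral_const_mul,
          intervalIntegral.integral_const_mul,
          integral_rpow (Or.inl (by linarith : (-1:ℝ) < q - 1)),
          integral_rpow (Or.inl (by linarith : (-1:ℝ) < q))]
        have e1 : q - 1 + 1 = q := by ring
        rw [e1, Real.zero_rpow hq0.ne', Real.zero_rpow (by linarith : q + 1 ≠ 0),
          sub_zero, sub_zero]
        have e2 : M ^ (q + 1) = M ^ q * M := Real.rpow_add_one hM.ne' q
        rw [e2]
        field_simp
        ring
      calc ∫⁻ t in Ioi (0:ℝ), ν {a | t < U a} * ENNReal.ofReal (g t)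
          ≤ ∫⁻ t in Ioi (0:ℝ), ENNReal.ofReal (M - t) * ENNReal.ofReal (g t) := step1
        _ = ENNReal.ofReal (∫ t in Ioc 0 M, (M - t) * g t) := by rw [step2, step3]
        _ = ENNReal.ofReal (M ^ (q + 1) / (q + 1)) := by rw [step4]
    have final : ENNReal.ofReal (∫ x, u x * U x ^ q ∂μ) ≤
        ENNReal.ofReal (M ^ (q + 1) / (q + 1)) := by
      rw [hJof, ← hwd, ← hLHS, layer]
      exact hRHS
    have h2 := ENNReal.toReal_mono ENNReal.ofReal_ne_top final
    have hnn : 0 ≤ ∫ x, u x * U x ^ q ∂μ := by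
      apply integral_nonneg_of_ae
      filter_upwards [haemem, huaeμ] with x h1 hx
      exact mul_nonneg hx (Real.rpow_nonneg (hUnn x (Ioo_subset_Icc_self h1)) q)
    rw [ENNReal.toReal_ofReal hnn, ENNReal.toReal_ofReal
      (div_nonneg (Real.rpow_nonneg hM.le _) (by linarith))] at h2
    exact h2
  -- Step B : Jensen for ∫ U^q B(u)
  have hIB : ∫ x, U x ^ q * B (u x) ∂μ ≤ (q * L) * B m0 := by
    obtain ⟨c, hc0, hcl⟩ := concave_supporting_line hBconc hBpos hm0
    have key : ∀ᵐ x ∂μ, U x ^ q * B (u x) ≤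
        B m0 * U x ^ q + c * (u x * U x ^ q) - c * m0 * U x ^ q := by
      filter_upwards [haemem] with x hx
      have h1 : B (u x) ≤ B m0 + c * (u x - m0) := hcl (u x) (hu x hx)
      have h2 : 0 ≤ U x ^ q := Real.rpow_nonneg (hUnn x (Ioo_subset_Icc_self hx)) q
      nlinarith [mul_le_mul_of_nonneg_left h1 h2]
    have i1 : Integrable (fun x => B m0 * U x ^ q) μ := by exact hUqint.const_mul _
    have i2 : Integrable (fun x => c * (u x * U x ^ q)) μ := by exact huUq.const_mul _
    have i3 : Integrable (fun x => c * m0 * U x ^ q) μ := by exact hUqint.const_mul _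
    have i12 : Integrable (fun x => B m0 * U x ^ q + c * (u x * U x ^ q)) μ := i1.add i2
    have hint2 : Integrable
        (fun x => B m0 * U x ^ q + c * (u x * U x ^ q) - c * m0 * U x ^ q) μ := i12.sub i3
    have h3 := integral_mono_ae hUqBu hint2 key
    rw [integral_sub i12 i3, integral_add i1 i2,
        integral_const_mul, integral_const_mul, integral_const_mul, ← hqL] at h3
    have h4 : c * (∫ x, u x * U x ^ q ∂μ) ≤ c * (m0 * (q * L)) := by
      apply mul_le_mul_of_nonneg_left _ hc0
      rw [hm0A]; exact hJ
    have h5 : c * m0 * (q * L) = c * (m0 * (q * L)) := by ring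
    linarith
  have hIBnn : 0 ≤ ∫ x, U x ^ q * B (u x) ∂μ := by
    apply integral_nonneg_of_ae
    filter_upwards [haemem, hBunn] with x hx hB
    exact mul_nonneg (Real.rpow_nonneg (hUnn x (Ioo_subset_Icc_self hx)) q) hB
  -- Hölder
  have hHolder : ∫ x, U x ^ (q - 2) * B (u x) ∂μ ≤
      (∫ x, U x ^ q * B (u x) ∂μ) ^ ((q - 2) / q) * (∫ x, B (u x) ∂μ) ^ (2 / q) := by
    have hpq : (q / (q - 2)).HolderConjugate (q / 2) := by
      rw [Real.holderConjugate_iff]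
      constructor
      · rw [lt_div_iff₀ hq2]; linarith
      · rw [inv_div, inv_div]; field_simp; ring
    set f : ℝ → ℝ := fun x => U x ^ (q - 2) * B (u x) ^ ((q - 2) / q) with hfdef
    set g : ℝ → ℝ := fun x => B (u x) ^ (2 / q) with hgdef
    have hfnn : 0 ≤ᵐ[μ] f := by
      filter_upwards [haemem, hBunn] with x hx hB
      exact mul_nonneg (Real.rpow_nonneg (hUnn x (Ioo_subset_Icc_self hx)) _)
        (Real.rpow_nonneg hB _)
    have hgnn : 0 ≤ᵐ[μ] g := by
      filter_upwards [hBunn] with x hB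
      exact Real.rpow_nonneg hB _
    have hfmeas : AEStronglyMeasurable f μ :=
      ((hrpow (q - 2) hq2).comp_aestronglyMeasurable hUmeas).mul
        ((hrpow ((q - 2) / q) (by positivity)).comp_aestronglyMeasurable hBuμ.aestronglyMeasurable)
    have hgmeas : AEStronglyMeasurable g μ :=
      (hrpow (2 / q) (by positivity)).comp_aestronglyMeasurable hBuμ.aestronglyMeasurable
    have hfpow : ∀ᵐ x ∂μ, ‖f x‖ ^ (q / (q - 2)) = U x ^ q * B (u x) := by
      filter_upwards [haemem, hBunn] with x hx hB
      have hU : 0 ≤ U x := hUnn x (Ioo_subset_Icc_self hx)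
      rw [hfdef]
      simp only []
      rw [Real.norm_of_nonneg (mul_nonneg (Real.rpow_nonneg hU _) (Real.rpow_nonneg hB _)),
          Real.mul_rpow (Real.rpow_nonneg hU _) (Real.rpow_nonneg hB _),
          ← Real.rpow_mul hU, ← Real.rpow_mul hB,
          show (q - 2) * (q / (q - 2)) = q by field_simp,
          show (q - 2) / q * (q / (q - 2)) = 1 by field_simp, Real.rpow_one]
    have hgpow : ∀ᵐ x ∂μ, ‖g x‖ ^ (q / 2) = B (u x) := by
      filter_upwards [hBunn] with x hB
      rw [hgdef]
      simp only []
      rw [Real.norm_of_nonneg (Real.rpow_nonneg hB _), ← Real.rpow_mul hB,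
          show 2 / q * (q / 2) = 1 by field_simp, Real.rpow_one]
    have hfmem : MemLp f (ENNReal.ofReal (q / (q - 2))) μ := by
      have hPz : ENNReal.ofReal (q / (q - 2)) ≠ 0 := by
        simp only [ne_eq, ENNReal.ofReal_eq_zero, not_le]; positivity
      have h := memLp_norm_rpow_iff (p := ENNReal.ofReal (q / (q - 2)))
        (q := ENNReal.ofReal (q / (q - 2))) hfmeas hPz ENNReal.ofReal_ne_top
      rw [ENNReal.div_self hPz ENNReal.ofReal_ne_top] at h
      refine h.1 ?_
      rw [memLp_one_iff_integrable]
      apply hUqBu.congr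
      rw [ENNReal.toReal_ofReal (by positivity)]
      filter_upwards [hfpow] with x hx using hx.symm
    have hgmem : MemLp g (ENNReal.ofReal (q / 2)) μ := by
      have hPz : ENNReal.ofReal (q / 2) ≠ 0 := by
        simp only [ne_eq, ENNReal.ofReal_eq_zero, not_le]; positivity
      have h := memLp_norm_rpow_iff (p := ENNReal.ofReal (q / 2))
        (q := ENNReal.ofReal (q / 2)) hgmeas hPz ENNReal.ofReal_ne_top
      rw [ENNReal.div_self hPz ENNReal.ofReal_ne_top] at h
      refine h.1 ?_
      rw [memLp_one_iff_integrable]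
      apply hBuμ.congr
      rw [ENNReal.toReal_ofReal (by positivity)]
      filter_upwards [hgpow] with x hx using hx.symm
    have H := integral_mul_le_Lp_mul_Lq_of_nonneg hpq hfnn hgnn hfmem hgmem
    have hsum : (q - 2) / q + 2 / q = 1 := by field_simp; ring
    have hfg : ∫ x, f x * g x ∂μ = ∫ x, U x ^ (q - 2) * B (u x) ∂μ := by
      apply integral_congr_ae
      filter_upwards [hBunn] with x hB
      rw [hfdef, hgdef]
      simp only []
      rw [mul_assoc, ← Real.rpow_add' hB (by rw [hsum]; norm_num), hsum, Real.rpow_one]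
    have hfp : ∫ x, f x ^ (q / (q - 2)) ∂μ = ∫ x, U x ^ q * B (u x) ∂μ := by
      apply integral_congr_ae
      filter_upwards [hfpow, hfnn] with x h1 h2
      rw [← h1, Real.norm_of_nonneg h2]
    have hgp : ∫ x, g x ^ (q / 2) ∂μ = ∫ x, B (u x) ∂μ := by
      apply integral_congr_ae
      filter_upwards [hgpow, hgnn] with x h1 h2
      rw [← h1, Real.norm_of_nonneg h2]
    rw [hfg, hfp, hgp, one_div_div, one_div_div] at H
    exact H
  -- assemble
  have hgoalLHS : (∫ x in (0:ℝ)..1, U x ^ (q - 2) * B (u x)) = ∫ x, U x ^ (q - 2) * B (u x) ∂μ := by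
    rw [hμdef, ← integral_Ioc_eq_integral_Ioo, ← intervalIntegral.integral_of_le zero_le_one]
  rw [hgoalLHS]
  calc ∫ x, U x ^ (q - 2) * B (u x) ∂μ
      ≤ (∫ x, U x ^ q * B (u x) ∂μ) ^ ((q - 2) / q) * (∫ x, B (u x) ∂μ) ^ (2 / q) := hHolder
    _ ≤ ((q * L) * B m0) ^ ((q - 2) / q) * (B M) ^ (2 / q) := by
        apply mul_le_mul
        · exact Real.rpow_le_rpow hIBnn hIB (by positivity)
        · exact Real.rpow_le_rpow hIAnn hIA (by positivity)
        · exact Real.rpow_nonneg hIAnn _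
        · exact Real.rpow_nonneg (mul_nonneg hL0.le (hBpos _ hm0.le)) _
    _ = (q * L) ^ ((q - 2) / q) * (B M) ^ (2 / q) * (B m0) ^ ((q - 2) / q) := by
        rw [Real.mul_rpow hL0.le (hBpos _ hm0.le)]
        ring
end
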